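/- arXiv:1212.6842 — 4 statements merged into one kernel-verified Lean document; each statement's English description precedes it below -/
import Mathlib

section
/- Every ℚ-vector space of countable dimension equipped with a valuation v into a linearly ordered value set (satisfying v(x) = ∞ iff x = 0, v(qx) = v(x) for nonzero rational q, and v(x+y) ≥ min(v(x), v(y))) admits a valuation basis, i.e., a basis {g_i} such that v(Σ qᵢgᵢ) = min{v(gᵢ) : qᵢ ≠ 0} for all finite rational combinations. -/
set_option linter.unusedSectionVars false

open Submodule

section Brown

variable {V : Type} [AddCommGroup V] [Module ℚ V] [DecidableEq V]
  {Γ : Type} [LinearOrder Γ] (v : V → WithTop Γ)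

/-- valuation independence of a finite set -/
def VI (s : Finset V) : Prop :=
  ∀ q : V → ℚ, v (∑ x ∈ s, q x • x) = s.inf fun x => v (q x • x)

variable (h0 : ∀ x : V, v x = ⊤ ↔ x = 0)
  (hsmul : ∀ q : ℚ, q ≠ 0 → ∀ x : V, v (q • x) = v x)
  (hadd : ∀ x y : V, min (v x) (v y) ≤ v (x + y))

include h0 in
lemma v_zero : v 0 = ⊤ := (h0 0).mpr rfl

include hsmul in
lemma v_neg (x : V) : v (-x) = v x := by
  have := hsmul (-1) (by norm_num) x
  simpa using this

include hsmul hadd in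
/-- Lemma C: if `v (x+w) ≤ v x` then equality with the min. -/
lemma v_add_eq_min {x w : V} (h : v (x + w) ≤ v x) : v (x + w) = min (v x) (v w) := by
  refine le_antisymm (le_min h ?_) (hadd x w)
  have : min (v (x + w)) (v (-x)) ≤ v (x + w + -x) := hadd _ _
  rw [v_neg v hsmul, add_neg_cancel_comm] at this
  calc v (x + w) = min (v (x + w)) (v x) := (min_eq_left h).symm
    _ ≤ v w := this

include h0 in
lemma vi_empty : VI v (∅ : Finset V) := by
  intro q; simp [VI, v_zero v h0]

include h0 in
lemma vi_mono {s t : Finset V} (hts : t ⊆ s) (hs : VI v s) : VI v t := by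
  classical
  intro q
  have key := hs (fun x => if x ∈ t then q x else 0)
  have h1 : ∑ x ∈ s, (if x ∈ t then q x else 0) • x = ∑ x ∈ t, q x • x := by
    rw [← Finset.sum_subset hts]
    · exact Finset.sum_congr rfl fun x hx => by simp [hx]
    · intro x hx hxt; simp [hxt]
  have h2 : (s.inf fun x => v ((if x ∈ t then q x else 0) • x)) = t.inf fun x => v (q x • x) := by
    rw [← Finset.union_sdiff_of_subset hts, Finset.inf_union]
    have ha : ((s \ t).inf fun x => v ((if x ∈ t then q x else 0) • x)) = ⊤ := by
      rw [Finset.inf_eq_top_iff]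
      intro x hx
      rw [Finset.mem_sdiff] at hx
      simp [hx.2, v_zero v h0]
    have hb : (t.inf fun x => v ((if x ∈ t then q x else 0) • x)) = t.inf fun x => v (q x • x) :=
      Finset.inf_congr rfl fun x hx => by simp [hx]
    rw [ha, hb, inf_top_eq]
  rw [← h1, ← h2, key]

include h0 hsmul in
/-- values of elements of the span of a VI set lie in a fixed finite set. -/
lemma vi_span_values {s : Finset V} (hs : VI v s) {u : V} (hu : u ∈ span ℚ (s : Set V)) :
    v u ∈ insert (⊤ : WithTop Γ) (s.image v) := by
  classical
  obtain ⟨f, -, rfl⟩ := mem_span_finset.mp hu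
  rw [hs f]
  rcases Finset.eq_empty_or_nonempty s with rfl | hne
  · simp
  obtain ⟨i, hi, hieq⟩ := Finset.exists_mem_eq_inf s hne (fun x => v (f x • x))
  rw [hieq]
  by_cases hfi : f i = 0
  · simp [hfi, v_zero v h0]
  · rw [hsmul _ hfi]
    have : v i ∈ s.image v := Finset.mem_image_of_mem v hi
    exact Finset.mem_insert.mpr (Or.inr this)


include hsmul hadd in
lemma v_sub_lt {a b : V} (h : v a < v b) : v (a - b) = v a := by
  apply le_antisymm
  · by_contra hc
    push_neg at hc
    have h2 := hadd (a - b) b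
    rw [sub_add_cancel] at h2
    exact absurd h2 (not_le.mpr (lt_min hc h))
  · have h3 := hadd a (-b)
    rw [v_neg v hsmul] at h3
    calc v a = min (v a) (v b) := (min_eq_left h.le).symm
      _ ≤ v (a + -b) := h3
      _ = v (a - b) := by rw [sub_eq_add_neg]

include hsmul hadd in
lemma v_sub_eq_min {a b : V} (hab : v a ≠ v b) : v (a - b) = min (v a) (v b) := by
  rcases hab.lt_or_gt with h | h
  · rw [v_sub_lt v hsmul hadd h, min_eq_left h.le]
  · have : a - b = -(b - a) := by abel
    rw [this, v_neg v hsmul, v_sub_lt v hsmul hadd h, min_eq_right h.le]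

include h0 hsmul hadd in
lemma exists_max_coset {s : Finset V} (hs : VI v s) (x : V) :
    ∃ u ∈ span ℚ (s : Set V), ∀ w ∈ span ℚ (s : Set V), v (x + w) ≤ v (x + u) := by
  classical
  set W : Set V := ↑(span ℚ (s : Set V)) with hW
  set T : Set (WithTop Γ) := (fun u => v (x + u)) '' W with hT
  have hTne : T.Nonempty := ⟨v (x + 0), 0, (span ℚ (s : Set V)).zero_mem, rfl⟩
  set F : Finset (WithTop Γ) := insert ⊤ (s.image v) with hF
  have hmemF : ∀ u1 u2 : V, u1 ∈ W → u2 ∈ W → v (x + u1) ≠ v (x + u2) →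
      min (v (x + u1)) (v (x + u2)) ∈ F := by
    intro u1 u2 h1 h2 hne
    have hsub : (x + u1) - (x + u2) = u1 - u2 := by abel
    have := v_sub_eq_min v hsmul hadd hne
    rw [hsub] at this
    rw [← this]
    exact vi_span_values v h0 hsmul hs (Submodule.sub_mem _ h1 h2)
  have hTfin : T.Finite := by
    by_cases hTF : T ⊆ ↑F
    · exact F.finite_toSet.subset hTF
    · obtain ⟨a, haT, haF⟩ := Set.not_subset.mp hTF
      apply Set.Finite.subset (Set.Finite.insert a F.finite_toSet)
      rintro b ⟨u2, hu2, rfl⟩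
      obtain ⟨u1, hu1, rfl⟩ := haT
      by_cases hab : v (x + u1) = v (x + u2)
      · exact Set.mem_insert_iff.mpr (Or.inl hab.symm)
      · have hmin := hmemF u1 u2 hu1 hu2 hab
        rcases min_cases (v (x + u1)) (v (x + u2)) with ⟨heq, _⟩ | ⟨heq, _⟩
        · rw [heq] at hmin
          exact absurd hmin haF
        · rw [heq] at hmin
          exact Set.mem_insert_iff.mpr (Or.inr hmin)
  obtain ⟨a, haT, hamax⟩ := Set.Finite.exists_maximalFor id T hTfin hTne
  obtain ⟨u, huW, rfl⟩ := haT
  refine ⟨u, huW, fun w hw => ?_⟩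
  rcases le_total (v (x + w)) (v (x + u)) with h | h
  · exact h
  · exact hamax ⟨w, hw, rfl⟩ h


include h0 hsmul hadd in
lemma vi_insert {s : Finset V} (hs : VI v s) {x : V} (hx : x ∉ span ℚ (s : Set V)) :
    ∃ y : V, y ≠ 0 ∧ x ∈ span ℚ (insert y (s : Set V)) ∧ VI v (insert y s) := by
  classical
  obtain ⟨u, huW, humax⟩ := exists_max_coset v h0 hsmul hadd hs x
  set y := x + u with hy
  clear_value y
  have hyW : y ∉ span ℚ (s : Set V) := by
    intro hmem
    have h2 := Submodule.sub_mem _ hmem huW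
    have h3 : y - u = x := by rw [hy]; abel
    rw [h3] at h2
    exact hx h2
  have hy0 : y ≠ 0 := fun h => hyW (h ▸ Submodule.zero_mem _)
  have hys : y ∉ s := fun h => hyW (Submodule.subset_span h)
  have hxmem : x ∈ span ℚ (insert y (s : Set V)) := by
    have h1 : y ∈ span ℚ (insert y (s : Set V)) := Submodule.subset_span (Set.mem_insert _ _)
    have h2 : u ∈ span ℚ (insert y (s : Set V)) :=
      Submodule.span_mono (Set.subset_insert _ _) huW
    have : x = y - u := by rw [hy]; abel
    rw [this]; exact Submodule.sub_mem _ h1 h2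
  have key : ∀ w ∈ span ℚ (s : Set V), v (y + w) = min (v y) (v w) := by
    intro w hw
    apply v_add_eq_min v hsmul hadd
    have : y + w = x + (u + w) := by rw [hy]; abel
    rw [this]
    exact humax _ (Submodule.add_mem _ huW hw)
  refine ⟨y, hy0, hxmem, fun q => ?_⟩
  rw [Finset.sum_insert hys, Finset.inf_insert]
  set u' : V := ∑ g ∈ s, q g • g with hu'
  have hu'W : u' ∈ span ℚ (s : Set V) :=
    Submodule.sum_mem _ fun g hg => Submodule.smul_mem _ _ (Submodule.subset_span hg)
  have hvu' : v u' = s.inf fun g => v (q g • g) := hs q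
  clear_value u'
  by_cases hq : q y = 0
  · rw [hq, zero_smul, zero_add, hvu', v_zero v h0, top_inf_eq]
  · have step1 : q y • y + u' = q y • (y + (q y)⁻¹ • u') := by
      rw [smul_add, smul_inv_smul₀ hq]
    rw [step1, hsmul _ hq, key _ (Submodule.smul_mem _ _ hu'W),
      hsmul _ (inv_ne_zero hq), ← hsmul _ hq y, hvu']


end Brown

section Chain

variable {V : Type} [AddCommGroup V] [Module ℚ V] [DecidableEq V]
  {Γ : Type} [LinearOrder Γ]

open Classical in
noncomputable def chain (e : ℕ → V) (v : V → WithTop Γ)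
    (h0 : ∀ x : V, v x = ⊤ ↔ x = 0)
    (hsmul : ∀ q : ℚ, q ≠ 0 → ∀ x : V, v (q • x) = v x)
    (hadd : ∀ x y : V, min (v x) (v y) ≤ v (x + y)) :
    ℕ → {s : Finset V // VI v s ∧ ∀ x ∈ s, x ≠ 0}
  | 0 => ⟨∅, vi_empty v h0, by simp⟩
  | n + 1 =>
    let p := chain e v h0 hsmul hadd n
    if h : e n ∈ span ℚ (p.1 : Set V) then p
    else
      let y := Classical.choose (vi_insert v h0 hsmul hadd p.2.1 h)
      have hy := Classical.choose_spec (vi_insert v h0 hsmul hadd p.2.1 h)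
      ⟨insert y p.1, hy.2.2, fun z hz => by
        rcases Finset.mem_insert.mp hz with h' | h'
        · exact h' ▸ hy.1
        · exact p.2.2 z h'⟩

variable (v : V → WithTop Γ)
    (h0 : ∀ x : V, v x = ⊤ ↔ x = 0)
    (hsmul : ∀ q : ℚ, q ≠ 0 → ∀ x : V, v (q • x) = v x)
    (hadd : ∀ x y : V, min (v x) (v y) ≤ v (x + y))
    (e : ℕ → V)

lemma chain_subset_succ (n : ℕ) :
    (chain e v h0 hsmul hadd n).1 ⊆ (chain e v h0 hsmul hadd (n + 1)).1 := by
  rw [chain]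
  dsimp only
  split_ifs with h
  · exact subset_rfl
  · exact Finset.subset_insert _ _

lemma chain_mono {m n : ℕ} (h : m ≤ n) :
    (chain e v h0 hsmul hadd m).1 ⊆ (chain e v h0 hsmul hadd n).1 := by
  induction n with
  | zero => rw [Nat.le_zero.mp h]
  | succ n ih =>
    rcases Nat.lt_or_ge m (n + 1) with h' | h'
    · exact (ih (Nat.lt_succ_iff.mp h')).trans (chain_subset_succ v h0 hsmul hadd e n)
    · rw [Nat.le_antisymm h h']

lemma e_mem_chain (n : ℕ) :
    e n ∈ span ℚ (((chain e v h0 hsmul hadd (n + 1)).1 : Set V)) := by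
  rw [chain]
  dsimp only
  split_ifs with h
  · exact h
  · rw [Finset.coe_insert]
    exact (Classical.choose_spec (vi_insert v h0 hsmul hadd
      (chain e v h0 hsmul hadd n).2.1 h)).2.1

end Chain


/-- Brown's theorem: every ℚ-vector space of countable dimension with a
valuation `v` into `Γ ∪ {∞}` (`Γ` a linear order, `∞ = ⊤` largest; `v x = ∞` iff
`x = 0`, `v (q • x) = v x` for nonzero rational `q`, `v (x + y) ≥ min (v x, v y)`)
admits a valuation basis: a basis `(gᵢ)` with
`v (Σ qᵢ • gᵢ) = min {v (gᵢ) : qᵢ ≠ 0}` for every finite rational combination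
(the right-hand side being `inf i in s, v (qᵢ • gᵢ)`, which equals that minimum). -/
theorem brown_valuation_basis (V : Type) [AddCommGroup V] [Module ℚ V]
    (Γ : Type) [LinearOrder Γ] (v : V → WithTop Γ)
    (h0 : ∀ x : V, v x = ⊤ ↔ x = 0)
    (hsmul : ∀ q : ℚ, q ≠ 0 → ∀ x : V, v (q • x) = v x)
    (hadd : ∀ x y : V, min (v x) (v y) ≤ v (x + y))
    (hcount : ∃ s : Set V, s.Countable ∧ Submodule.span ℚ s = ⊤) :
    ∃ (ι : Type) (g : ι → V), LinearIndependent ℚ g ∧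
      Submodule.span ℚ (Set.range g) = ⊤ ∧
      ∀ (s : Finset ι) (q : ι → ℚ),
        v (∑ i ∈ s, q i • g i) = s.inf fun i => v (q i • g i) := by
  classical
  obtain ⟨s0, hc, hspan⟩ := hcount
  have henum : ∃ e : ℕ → V, Submodule.span ℚ (Set.range e) = ⊤ := by
    rcases s0.eq_empty_or_nonempty with rfl | hne
    · exact ⟨fun _ => 0, eq_top_iff.mpr (hspan ▸ Submodule.span_mono (Set.empty_subset _))⟩
    · obtain ⟨e, he⟩ := hc.exists_eq_range hne
      exact ⟨e, he ▸ hspan⟩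
  obtain ⟨e, hespan⟩ := henum
  set C : ℕ → Finset V := fun n => (chain e v h0 hsmul hadd n).1 with hC
  set S : Set V := ⋃ n, (C n : Set V) with hS
  have hne0 : ∀ x ∈ S, x ≠ (0 : V) := by
    intro x hx
    obtain ⟨n, hn⟩ := Set.mem_iUnion.mp hx
    exact (chain e v h0 hsmul hadd n).2.2 x hn
  have hfin : ∀ s : Finset ↥S, ∃ n, ∀ i ∈ s, (i : V) ∈ C n := by
    intro s
    induction s using Finset.induction_on with
    | empty => exact ⟨0, by simp⟩
    | insert a s' ha ih =>
      obtain ⟨n1, h1⟩ := ih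
      obtain ⟨n2, h2⟩ := Set.mem_iUnion.mp a.2
      refine ⟨max n1 n2, fun i hi => ?_⟩
      rcases Finset.mem_insert.mp hi with rfl | hi'
      · exact chain_mono v h0 hsmul hadd e (le_max_right n1 n2) h2
      · exact chain_mono v h0 hsmul hadd e (le_max_left n1 n2) (h1 i hi')
  have key : ∀ (s : Finset ↥S) (q : ↥S → ℚ),
      v (∑ i ∈ s, q i • (i : V)) = s.inf fun i => v (q i • (i : V)) := by
    intro s q
    obtain ⟨n, hn⟩ := hfin s
    set Q : V → ℚ := fun x => if h : x ∈ S then q ⟨x, h⟩ else 0 with hQ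
    have hQi : ∀ i : ↥S, Q (i : V) = q i := by
      intro i
      simp only [hQ, i.2, dif_pos]
    set t : Finset V := s.image Subtype.val with ht
    have hts : t ⊆ C n := by
      intro x hx
      obtain ⟨i, hi, rfl⟩ := Finset.mem_image.mp hx
      exact hn i hi
    have hinj : ∀ x ∈ s, ∀ y ∈ s, (x : V) = (y : V) → x = y :=
      fun x _ y _ h => Subtype.ext h
    have h1 : ∑ x ∈ t, Q x • x = ∑ i ∈ s, q i • (i : V) := by
      rw [ht, Finset.sum_image hinj]
      exact Finset.sum_congr rfl fun i _ => by rw [hQi]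
    have h2 : (t.inf fun x => v (Q x • x)) = s.inf fun i => v (q i • (i : V)) := by
      rw [ht, Finset.inf_image]
      exact Finset.inf_congr rfl fun i _ => by simp only [Function.comp, hQi]
    rw [← h1, ← h2]
    exact vi_mono v h0 hts (chain e v h0 hsmul hadd n).2.1 Q
  refine ⟨↥S, Subtype.val, ?_, ?_, key⟩
  · rw [linearIndependent_iff']
    intro s g hsum i hi
    have hv := key s g
    rw [hsum, (h0 0).mpr rfl] at hv
    have := (Finset.inf_eq_top_iff _ s).mp hv.symm i hi
    rcases smul_eq_zero.mp ((h0 _).mp this) with h | h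
    · exact h
    · exact absurd h (hne0 _ i.2)
  · rw [Subtype.range_coe]
    rw [eq_top_iff, ← hespan]
    apply Submodule.span_le.mpr
    rintro _ ⟨n, rfl⟩
    have h1 := e_mem_chain v h0 hsmul hadd e n
    have h2 : ((C (n + 1) : Finset V) : Set V) ⊆ S := Set.subset_iUnion (fun n => ((C n : Finset V) : Set V)) (n + 1)
    exact Submodule.span_mono h2 h1
end

section
/- Let G be an ordered abelian group, γ an archimedean equivalence class of G, and x ∈ γ a positive element. Define for y ∈ γ the real number y/x := sup{r ∈ ℚ : r·x < y}, and let A_{γ,x} = {y/x : y ∈ γ} ∪ {0}. Then A_{γ,x} is a subgroup of (ℝ, +). -/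
/-- Archimedean equivalence: `x ∼ y` iff `∃ n ∈ ℕ, n|x| ≥ |y|` and `n|y| ≥ |x|`. -/
def archEquiv {G : Type*} [AddCommGroup G] [LinearOrder G] [IsOrderedAddMonoid G] (x y : G) : Prop :=
  ∃ n : ℕ, |y| ≤ n • |x| ∧ |x| ≤ n • |y|

/-- For `y` archimedean-equivalent to a positive `x`, the real number
`y/x := sup {r ∈ ℚ : r • x < y}`. -/
noncomputable def ratio {G : Type*} [AddCommGroup G] [LinearOrder G] [IsOrderedAddMonoid G] [Module ℚ G]
    (y x : G) : ℝ :=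
  sSup {r : ℝ | ∃ q : ℚ, r = (q : ℝ) ∧ q • x < y}

section Aux

variable {G : Type*} [AddCommGroup G] [LinearOrder G] [IsOrderedAddMonoid G] [Module ℚ G]

lemma qsmul_pos' {q : ℚ} {a : G} (hq : 0 < q) (ha : 0 < a) : 0 < q • a := by
  by_contra h
  push_neg at h
  have h1 : q.den • (q • a) ≤ 0 := nsmul_nonpos h q.den
  rw [← Nat.cast_smul_eq_nsmul ℚ, smul_smul, Rat.den_mul_eq_num, Int.cast_smul_eq_zsmul] at h1
  have h2 : 0 < q.num • a := zsmul_pos ha (by exact_mod_cast Rat.num_pos.2 hq)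
  exact h2.not_ge h1

lemma qsmul_nonneg' {q : ℚ} {a : G} (hq : 0 ≤ q) (ha : 0 ≤ a) : 0 ≤ q • a := by
  rcases hq.eq_or_lt with h | h
  · simp [← h]
  rcases ha.eq_or_lt with h' | h'
  · simp [← h']
  exact (qsmul_pos' h h').le

lemma qsmul_lt_qsmul {q q' : ℚ} {a : G} (h : q < q') (ha : 0 < a) :
    q • a < q' • a := by
  have := qsmul_pos' (sub_pos.2 h) ha
  rw [sub_smul, sub_pos] at this
  exact this

/-- the cut defining `ratio y x` -/
def cut (y x : G) : Set ℝ := {r : ℝ | ∃ q : ℚ, r = (q : ℝ) ∧ q • x < y}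

lemma cut_nonempty {x y : G} (hx : 0 < x) {n : ℕ} (hn : |y| ≤ n • x) :
    (cut y x).Nonempty := by
  refine ⟨(-(n+1) : ℚ), _, rfl, ?_⟩
  have h1 : (-(n+1) : ℚ) • x < (-(n:ℚ)) • x := qsmul_lt_qsmul (by norm_num) hx
  have h2 : ((-(n:ℚ))) • x = -(n • x) := by
    rw [neg_smul, Nat.cast_smul_eq_nsmul]
  calc (-(n+1) : ℚ) • x < -(n • x) := by rw [← h2]; exact h1
    _ ≤ -|y| := neg_le_neg hn
    _ ≤ y := neg_abs_le y

lemma qsmul_le_qsmul {q q' : ℚ} {a : G} (h : q ≤ q') (ha : 0 < a) :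
    q • a ≤ q' • a := by
  rcases h.eq_or_lt with h' | h'
  · rw [h']
  · exact (qsmul_lt_qsmul h' ha).le

lemma cut_bddAbove {x y : G} (hx : 0 < x) {n : ℕ} (hn : |y| ≤ n • x) :
    BddAbove (cut y x) := by
  refine ⟨(n : ℝ), fun r hr => ?_⟩
  obtain ⟨q, rfl, hq⟩ := hr
  have h1 : q • x < (n : ℚ) • x := by
    rw [Nat.cast_smul_eq_nsmul]
    exact hq.trans_le ((le_abs_self y).trans hn)
  have : q ≤ (n : ℚ) := by
    by_contra hle
    push_neg at hle
    exact ((qsmul_le_qsmul hle.le hx).trans_lt h1).false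
  exact_mod_cast this

lemma le_ratio {x y : G} (hx : 0 < x) {n : ℕ} (hn : |y| ≤ n • x) {q : ℚ}
    (h : q • x < y) : (q : ℝ) ≤ ratio y x :=
  le_csSup (cut_bddAbove hx hn) ⟨q, rfl, h⟩

lemma ratio_le {x y : G} (hx : 0 < x) {n : ℕ} (hn : |y| ≤ n • x) {q : ℚ}
    (h : y ≤ q • x) : ratio y x ≤ (q : ℝ) := by
  apply csSup_le (cut_nonempty hx hn)
  rintro r ⟨q', rfl, hq'⟩
  have : q' ≤ q := by
    by_contra hc
    push_neg at hc
    exact ((qsmul_le_qsmul hc.le hx).trans_lt (hq'.trans_le h)).false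
  exact_mod_cast this

lemma le_smul_of_ratio_lt {x y : G} (hx : 0 < x) {n : ℕ} (hn : |y| ≤ n • x) {q : ℚ}
    (h : ratio y x < (q : ℝ)) : y ≤ q • x := by
  by_contra hc
  push_neg at hc
  exact (le_ratio hx hn hc).not_gt h

end Aux

section Aux2

variable {G : Type*} [AddCommGroup G] [LinearOrder G] [IsOrderedAddMonoid G] [Module ℚ G]

lemma qsmul_lt_qsmul_left {q : ℚ} {a b : G} (hq : 0 < q) (h : a < b) :
    q • a < q • b := by
  have := qsmul_pos' hq (sub_pos.2 h)
  rw [smul_sub, sub_pos] at this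
  exact this

lemma qsmul_le_qsmul_right {q q' : ℚ} {a : G} (h : q ≤ q') (ha : 0 ≤ a) :
    q • a ≤ q' • a := by
  have := qsmul_nonneg' (sub_nonneg.2 h) ha
  rw [sub_smul, sub_nonneg] at this
  exact this

/-- key smallness fact: if `w` is infinitesimal w.r.t. `x` then `|w| < q • x`
for every positive rational `q`. -/
lemma abs_lt_qsmul {q : ℚ} {w x : G} (hq : 0 < q) (h : ∀ n : ℕ, n • |w| < x) :
    |w| < q • x := by
  have hqi : (0:ℚ) < q⁻¹ := by positivity
  have h1 : q⁻¹ • |w| ≤ (⌈q⁻¹⌉₊ : ℚ) • |w| :=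
    qsmul_le_qsmul_right (Nat.le_ceil _) (abs_nonneg w)
  have h2 : ((⌈q⁻¹⌉₊ : ℚ)) • |w| = ⌈q⁻¹⌉₊ • |w| := Nat.cast_smul_eq_nsmul ℚ _ _
  have h3 : q⁻¹ • |w| < x := (h1.trans_eq h2).trans_lt (h _)
  have := qsmul_lt_qsmul_left hq h3
  rwa [smul_inv_smul₀ hq.ne'] at this

lemma ratio_small {w x : G} (hx : 0 < x) (h : ∀ n : ℕ, n • |w| < x) :
    ratio w x = 0 := by
  have hxw : -x < w := by
    have := h 1
    rw [one_nsmul] at this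
    calc -x < -|w| := neg_lt_neg this
      _ ≤ w := neg_abs_le w
  have hne : (cut w x).Nonempty := by
    refine ⟨((-1 : ℚ) : ℝ), -1, rfl, ?_⟩
    rw [neg_smul, one_smul]
    exact hxw
  have hub : ∀ r ∈ cut w x, r ≤ 0 := by
    rintro r ⟨q, rfl, hq⟩
    by_contra hc
    push_neg at hc
    have hqpos : 0 < q := by exact_mod_cast hc
    have : w < q • x := (le_abs_self w).trans_lt (abs_lt_qsmul hqpos h)
    exact (hq.trans this).false
  have hbdd : BddAbove (cut w x) := ⟨0, hub⟩
  refine le_antisymm (csSup_le hne hub) ?_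
  apply le_of_forall_lt
  intro c hc
  obtain ⟨q, hq1, hq2⟩ := exists_rat_btwn hc
  have hqneg : q < 0 := by exact_mod_cast hq2
  have hmem : ((q:ℝ)) ∈ cut w x := by
    refine ⟨q, rfl, ?_⟩
    have habs : |w| < (-q) • x := abs_lt_qsmul (by linarith) h
    have : q • x < -|w| := by
      have := neg_lt_neg habs
      rwa [neg_smul, neg_neg] at this
    exact this.trans_le (neg_abs_le w)
  exact hq1.trans_le (le_csSup hbdd hmem)

lemma small_of_not_equiv {w x : G} (hx : 0 < x) (hb : ∃ m : ℕ, |w| ≤ m • x)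
    (hne : ¬ archEquiv x w) : ∀ n : ℕ, n • |w| < x := by
  intro n
  obtain ⟨m, hm⟩ := hb
  have hxx : |x| = x := abs_of_pos hx
  have h1 : |w| ≤ (max n m) • x := hm.trans (nsmul_le_nsmul_left hx.le (le_max_right n m))
  have h2 : ¬ (x ≤ (max n m) • |w|) := by
    intro hcon
    exact hne ⟨max n m, by rwa [hxx], by rwa [hxx]⟩
  push_neg at h2
  exact (nsmul_le_nsmul_left (abs_nonneg w) (le_max_left n m)).trans_lt h2

lemma archEquiv_abs_le {x y : G} (hx : 0 < x) (h : archEquiv x y) :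
    ∃ n : ℕ, |y| ≤ n • x := by
  obtain ⟨n, h1, _⟩ := h
  exact ⟨n, by rwa [abs_of_pos hx] at h1⟩

lemma ratio_add {x y z : G} (hx : 0 < x) (hy : archEquiv x y) (hz : archEquiv x z) :
    ratio (y + z) x = ratio y x + ratio z x := by
  obtain ⟨n, hn⟩ := archEquiv_abs_le hx hy
  obtain ⟨m, hm⟩ := archEquiv_abs_le hx hz
  have hnm : |y + z| ≤ (n + m) • x :=
    (abs_add_le y z).trans (by rw [add_nsmul]; exact add_le_add hn hm)
  apply le_antisymm
  · apply csSup_le (cut_nonempty hx hnm)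
    rintro r ⟨q, rfl, hq⟩
    by_contra hc
    push_neg at hc
    have h1 : ratio y x < (q : ℝ) - ratio z x := by linarith
    obtain ⟨q1, hq1a, hq1b⟩ := exists_rat_btwn h1
    have hy1 : y ≤ q1 • x := le_smul_of_ratio_lt hx hn hq1a
    have h2 : ratio z x < ((q - q1 : ℚ) : ℝ) := by push_cast; linarith
    have hz1 : z ≤ (q - q1) • x := le_smul_of_ratio_lt hx hm h2
    have : y + z ≤ q • x := by
      calc y + z ≤ q1 • x + (q - q1) • x := add_le_add hy1 hz1
        _ = q • x := by rw [← add_smul]; ring_nf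
    exact (hq.trans_le this).false
  · apply le_of_forall_lt
    intro c hc
    have h1 : c - ratio z x < ratio y x := by linarith
    obtain ⟨r1, hr1mem, hr1⟩ := exists_lt_of_lt_csSup (cut_nonempty hx hn) h1
    obtain ⟨q1, rfl, hq1⟩ := hr1mem
    have h2 : c - (q1:ℝ) < ratio z x := by linarith
    obtain ⟨r2, hr2mem, hr2⟩ := exists_lt_of_lt_csSup (cut_nonempty hx hm) h2
    obtain ⟨q2, rfl, hq2⟩ := hr2mem
    have hsum : (q1 + q2) • x < y + z := by
      rw [add_smul]; exact add_lt_add hq1 hq2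
    have := le_ratio hx hnm hsum
    push_cast at this
    linarith

lemma archEquiv_neg {x y : G} (h : archEquiv x y) : archEquiv x (-y) := by
  obtain ⟨n, h1, h2⟩ := h
  exact ⟨n, by rwa [abs_neg], by rwa [abs_neg]⟩

lemma ratio_zero {x : G} (hx : 0 < x) : ratio (0 : G) x = 0 :=
  ratio_small hx (fun n => by simpa using hx)

lemma ratio_neg {x y : G} (hx : 0 < x) (hy : archEquiv x y) :
    ratio (-y) x = -(ratio y x) := by
  have h := ratio_add hx hy (archEquiv_neg hy)
  rw [add_neg_cancel, ratio_zero hx] at h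
  linarith

end Aux2

/-- for a positive `x` in an (divisible) ordered abelian group with
archimedean class `γ = [x]`, the set `A_{γ,x} = {y/x : y ∈ γ} ∪ {0}` is a subgroup
of `(ℝ, +)`. -/
theorem archComponent_addSubgroup (G : Type*) [AddCommGroup G] [LinearOrder G] [IsOrderedAddMonoid G]
    [Module ℚ G] (x : G) (hx : 0 < x) :
    ∃ H : AddSubgroup ℝ,
      (H : Set ℝ) = {r : ℝ | ∃ y : G, archEquiv x y ∧ ratio y x = r} ∪ {0} := by
  refine ⟨⟨⟨⟨{r : ℝ | ∃ y : G, archEquiv x y ∧ ratio y x = r} ∪ {0}, ?_⟩, ?_⟩, ?_⟩, rfl⟩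
  · -- add_mem
    rintro a b (⟨y, hy, rfl⟩ | ha) (⟨z, hz, rfl⟩ | hb)
    · have hsum := ratio_add hx hy hz
      by_cases he : archEquiv x (y + z)
      · exact Or.inl ⟨y + z, he, hsum⟩
      · right
        rw [Set.mem_singleton_iff, ← hsum]
        obtain ⟨n, hn⟩ := archEquiv_abs_le hx hy
        obtain ⟨m, hm⟩ := archEquiv_abs_le hx hz
        refine ratio_small hx (small_of_not_equiv hx ⟨n + m, ?_⟩ he)
        exact (abs_add_le y z).trans (by rw [add_nsmul]; exact add_le_add hn hm)
    · rw [Set.mem_singleton_iff] at hb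
      subst hb
      exact Or.inl ⟨y, hy, by rw [add_zero]⟩
    · rw [Set.mem_singleton_iff] at ha
      subst ha
      exact Or.inl ⟨z, hz, by rw [zero_add]⟩
    · rw [Set.mem_singleton_iff] at ha hb
      subst ha; subst hb
      right; simp
  · -- zero_mem
    exact Or.inr rfl
  · -- neg_mem
    rintro a (⟨y, hy, rfl⟩ | ha)
    · exact Or.inl ⟨-y, archEquiv_neg hy, ratio_neg hx hy⟩
    · rw [Set.mem_singleton_iff] at ha
      subst ha
      right; simp
end

section
/- Every archimedean ordered abelian group embeds (as an ordered group) into (ℝ, +, 0, <). (Hölder's theorem.) -/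
section HolderAux

variable {G : Type*} [AddCommGroup G] [LinearOrder G] [IsOrderedAddMonoid G] [Archimedean G]

/-- The "floor" of `g` with respect to `ε`. -/
noncomputable def holderPhi (hε : (0:G) < ε) (g : G) : ℤ :=
  (existsUnique_zsmul_near_of_pos hε g).exists.choose

lemma holderPhi_le {ε : G} (hε : (0:G) < ε) (g : G) : holderPhi hε g • ε ≤ g :=
  (existsUnique_zsmul_near_of_pos hε g).exists.choose_spec.1

lemma lt_holderPhi_succ {ε : G} (hε : (0:G) < ε) (g : G) :
    g < (holderPhi hε g + 1) • ε :=
  (existsUnique_zsmul_near_of_pos hε g).exists.choose_spec.2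

lemma holderPhi_lb {ε : G} (hε : (0:G) < ε) (x y : G) :
    holderPhi hε x + holderPhi hε y ≤ holderPhi hε (x + y) := by
  have h1 : (holderPhi hε x + holderPhi hε y) • ε ≤ x + y := by
    rw [add_zsmul]; exact add_le_add (holderPhi_le hε x) (holderPhi_le hε y)
  have h2 : (holderPhi hε x + holderPhi hε y) • ε < (holderPhi hε (x + y) + 1) • ε :=
    h1.trans_lt (lt_holderPhi_succ hε (x + y))
  have := (zsmul_lt_zsmul_iff_left hε).mp h2
  omega

lemma holderPhi_ub {ε : G} (hε : (0:G) < ε) (x y : G) :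
    holderPhi hε (x + y) ≤ holderPhi hε x + holderPhi hε y + 1 := by
  have h1 : x + y < (holderPhi hε x + 1 + (holderPhi hε y + 1)) • ε := by
    rw [add_zsmul]
    exact add_lt_add (lt_holderPhi_succ hε x) (lt_holderPhi_succ hε y)
  have h2 : holderPhi hε (x + y) • ε < (holderPhi hε x + 1 + (holderPhi hε y + 1)) • ε :=
    (holderPhi_le hε (x + y)).trans_lt h1
  have := (zsmul_lt_zsmul_iff_left hε).mp h2
  omega

/-- The approximating sequence. -/
noncomputable def holderSeq (hε : (0:G) < ε) (x : G) (n : ℕ) : ℝ :=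
  (holderPhi hε ((2 ^ n : ℕ) • x) : ℝ) / 2 ^ n

lemma holderSeq_mono {ε : G} (hε : (0:G) < ε) (x : G) : Monotone (holderSeq hε x) := by
  apply monotone_nat_of_le_succ
  intro n
  have key : 2 * holderPhi hε ((2 ^ n : ℕ) • x) ≤ holderPhi hε ((2 ^ (n+1) : ℕ) • x) := by
    have h : (2 ^ (n+1) : ℕ) • x = (2 ^ n : ℕ) • x + (2 ^ n : ℕ) • x := by
      rw [← add_nsmul]; ring_nf
    rw [h]
    have := holderPhi_lb hε ((2 ^ n : ℕ) • x) ((2 ^ n : ℕ) • x)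
    omega
  have keyR : (2:ℝ) * (holderPhi hε ((2 ^ n : ℕ) • x) : ℝ)
      ≤ (holderPhi hε ((2 ^ (n+1) : ℕ) • x) : ℝ) := by exact_mod_cast key
  unfold holderSeq
  rw [div_le_div_iff₀ (by positivity) (by positivity)]
  push_cast
  rw [pow_succ]
  nlinarith [keyR, (by positivity : (0:ℝ) < 2 ^ n)]

lemma holderSeq_bddAbove {ε : G} (hε : (0:G) < ε) (x : G) :
    BddAbove (Set.range (holderSeq hε x)) := by
  obtain ⟨m, hm⟩ := Archimedean.arch x hε
  refine ⟨m, ?_⟩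
  rintro _ ⟨n, rfl⟩
  have h1 : (2 ^ n : ℕ) • x ≤ ((2 ^ n * m : ℕ) : ℤ) • ε := by
    rw [natCast_zsmul]
    calc (2 ^ n : ℕ) • x ≤ (2 ^ n : ℕ) • (m • ε) := nsmul_le_nsmul_right hm _
      _ = (2 ^ n * m : ℕ) • ε := (mul_nsmul' ε (2^n) m).symm
  have h2 : holderPhi hε ((2 ^ n : ℕ) • x) • ε ≤ ((2 ^ n * m : ℕ) : ℤ) • ε :=
    (holderPhi_le hε _).trans h1
  have h3 : holderPhi hε ((2 ^ n : ℕ) • x) ≤ ((2 ^ n * m : ℕ) : ℤ) :=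
    (zsmul_le_zsmul_iff_left hε).mp h2
  have h4 : (holderPhi hε ((2 ^ n : ℕ) • x) : ℝ) ≤ (2 ^ n * m : ℕ) :=
    by exact_mod_cast Int.cast_le.mpr h3
  unfold holderSeq
  rw [div_le_iff₀ (by positivity)]
  push_cast at h4 ⊢
  nlinarith [h4]

/-- The Hölder embedding function. -/
noncomputable def holderF (hε : (0:G) < ε) (x : G) : ℝ :=
  ⨆ n, holderSeq hε x n

lemma holderF_tendsto {ε : G} (hε : (0:G) < ε) (x : G) :
    Filter.Tendsto (holderSeq hε x) Filter.atTop (nhds (holderF hε x)) :=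
  tendsto_atTop_ciSup (holderSeq_mono hε x) (holderSeq_bddAbove hε x)

lemma holderF_add {ε : G} (hε : (0:G) < ε) (x y : G) :
    holderF hε (x + y) = holderF hε x + holderF hε y := by
  have hlow : ∀ n, holderSeq hε x n + holderSeq hε y n ≤ holderSeq hε (x + y) n := by
    intro n
    have h : (2 ^ n : ℕ) • (x + y) = (2 ^ n : ℕ) • x + (2 ^ n : ℕ) • y := nsmul_add x y _
    have key := holderPhi_lb hε ((2 ^ n : ℕ) • x) ((2 ^ n : ℕ) • y)
    unfold holderSeq
    rw [h, ← add_div, div_le_div_iff₀ (by positivity) (by positivity)]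
    have : ((holderPhi hε ((2 ^ n : ℕ) • x) + holderPhi hε ((2 ^ n : ℕ) • y) : ℤ) : ℝ) ≤
        (holderPhi hε ((2 ^ n : ℕ) • x + (2 ^ n : ℕ) • y) : ℝ) := by exact_mod_cast key
    push_cast at this ⊢
    nlinarith [(by positivity : (0:ℝ) < 2 ^ n)]
  have hhigh : ∀ n, holderSeq hε (x + y) n ≤
      holderSeq hε x n + holderSeq hε y n + (1 / 2) ^ n := by
    intro n
    have h : (2 ^ n : ℕ) • (x + y) = (2 ^ n : ℕ) • x + (2 ^ n : ℕ) • y := nsmul_add x y _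
    have key := holderPhi_ub hε ((2 ^ n : ℕ) • x) ((2 ^ n : ℕ) • y)
    unfold holderSeq
    rw [h]
    have hc : ((holderPhi hε ((2 ^ n : ℕ) • x + (2 ^ n : ℕ) • y)) : ℝ) ≤
        (holderPhi hε ((2 ^ n : ℕ) • x) : ℝ) + (holderPhi hε ((2 ^ n : ℕ) • y) : ℝ) + 1 := by
      exact_mod_cast key
    calc (holderPhi hε ((2 ^ n : ℕ) • x + (2 ^ n : ℕ) • y) : ℝ) / 2 ^ n
        ≤ ((holderPhi hε ((2 ^ n : ℕ) • x) : ℝ) + (holderPhi hε ((2 ^ n : ℕ) • y) : ℝ) + 1)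
            / 2 ^ n := by gcongr
      _ = (holderPhi hε ((2 ^ n : ℕ) • x) : ℝ) / 2 ^ n
            + (holderPhi hε ((2 ^ n : ℕ) • y) : ℝ) / 2 ^ n + (1/2) ^ n := by
          rw [div_pow, one_pow]; ring
  have t1 : Filter.Tendsto (fun n => holderSeq hε x n + holderSeq hε y n) Filter.atTop
      (nhds (holderF hε x + holderF hε y)) :=
    (holderF_tendsto hε x).add (holderF_tendsto hε y)
  have t2 : Filter.Tendsto (fun n => holderSeq hε x n + holderSeq hε y n + (1/2) ^ n)
      Filter.atTop (nhds (holderF hε x + holderF hε y)) := by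
    have := t1.add (tendsto_pow_atTop_nhds_zero_of_lt_one (by norm_num : (0:ℝ) ≤ 1/2)
      (by norm_num : (1:ℝ)/2 < 1))
    simpa using this
  have := tendsto_of_tendsto_of_tendsto_of_le_of_le t1 t2 hlow hhigh
  exact tendsto_nhds_unique (holderF_tendsto hε (x + y)) this

lemma holderF_pos {ε : G} (hε : (0:G) < ε) {x : G} (hx : 0 < x) : 0 < holderF hε x := by
  obtain ⟨m, hm⟩ := Archimedean.arch ε hx
  obtain ⟨n, hn⟩ : ∃ n : ℕ, m ≤ 2 ^ n := ⟨m, Nat.lt_two_pow_self.le⟩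
  have h1 : ε ≤ (2 ^ n : ℕ) • x := hm.trans (nsmul_le_nsmul_left hx.le hn)
  have h2 : (1:ℤ) ≤ holderPhi hε ((2 ^ n : ℕ) • x) := by
    have h5 : (1:ℤ) • ε < (holderPhi hε ((2 ^ n : ℕ) • x) + 1) • ε := by
      rw [one_zsmul]
      exact h1.trans_lt (lt_holderPhi_succ hε ((2 ^ n : ℕ) • x))
    have := (zsmul_lt_zsmul_iff_left hε).mp h5
    omega
  have h3 : (0:ℝ) < holderSeq hε x n := by
    unfold holderSeq
    have : (1:ℝ) ≤ (holderPhi hε ((2 ^ n : ℕ) • x) : ℝ) := by exact_mod_cast h2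
    positivity
  exact h3.trans_le (le_ciSup (holderSeq_bddAbove hε x) n)

end HolderAux

/-- Hölder's theorem: every archimedean ordered abelian group embeds,
as an ordered group, into `(ℝ, +, 0, <)`. -/
theorem holder_embedding (G : Type*) [AddCommGroup G] [LinearOrder G] [IsOrderedAddMonoid G] [Archimedean G] :
    ∃ f : G →+ ℝ, StrictMono f := by
  by_cases hG : ∃ ε : G, 0 < ε
  · obtain ⟨ε, hε⟩ := hG
    refine ⟨AddMonoidHom.mk' (holderF hε) (holderF_add hε), ?_⟩
    intro x y hxy
    have h := holderF_pos hε (sub_pos.mpr hxy)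
    have hadd := holderF_add hε x (y - x)
    simp only [add_sub_cancel] at hadd
    simp only [AddMonoidHom.mk'_apply]
    linarith
  · push_neg at hG
    refine ⟨0, ?_⟩
    intro x y hxy
    have hx0 : x = 0 := le_antisymm (hG x) (neg_nonpos.mp (hG (-x)))
    have hy0 : y = 0 := le_antisymm (hG y) (neg_nonpos.mp (hG (-y)))
    rw [hx0, hy0] at hxy
    exact absurd hxy (lt_irrefl 0)
end

section
/- If φ: (S, +, 0, <) → (K, +, 0, <) is an ordered group isomorphism between two subgroups S, K of ℝ, each containing 1 and closed under multiplication and inversion of nonzero elements (i.e., subfields of ℝ), then S = K and the identity map is a field isomorphism from S to K. In particular, φ(x) = r·x for some real r with r ∈ K and 1/r ∈ S. -/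
/-- if `φ : (S, +, 0, <) ≃ (K, +, 0, <)` is an ordered additive group
isomorphism between two subfields `S, K` of `ℝ`, then `S = K`, the identity map is a
field isomorphism from `S` to `K`, and `φ` is multiplication by some real `r` with
`r ∈ K` and `r⁻¹ ∈ S`. -/
theorem orderedGroupIso_subfields (S K : Subfield ℝ) (φ : S ≃+ K)
    (hφ : StrictMono φ) :
    S = K ∧ ∃ r : ℝ, r ∈ K ∧ r⁻¹ ∈ S ∧ ∀ x : S, (φ x : ℝ) = r * (x : ℝ) := by
  set r : ℝ := (φ 1 : ℝ) with hrdef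
  have hr0 : (0:ℝ) < r := by
    have h01 : (0:S) < 1 := zero_lt_one
    have := hφ h01
    rw [map_zero] at this
    exact_mod_cast this
  have hrne : r ≠ 0 := ne_of_gt hr0
  have hq : ∀ q : ℚ, (φ (q : S) : ℝ) = q * r := by
    intro q
    have h1 : (q : S) = q • (1 : S) := by
      rw [Rat.smul_one_eq_cast]
    rw [h1, map_rat_smul]
    push_cast
    rw [Rat.smul_def]
  have key : ∀ x : S, (φ x : ℝ) = r * (x : ℝ) := by
    intro x
    by_contra hne
    rcases lt_or_gt_of_ne hne with h | h
    · obtain ⟨q, hq1, hq2⟩ := exists_rat_btwn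
        (show (φ x : ℝ) / r < (x : ℝ) from (div_lt_iff₀ hr0).2 (by linarith [mul_comm r (x:ℝ)]))
      have hlt : (q : S) < x := by
        rw [← Subtype.coe_lt_coe]
        push_cast
        exact hq2
      have h2 : (φ (q : S) : ℝ) < (φ x : ℝ) := by exact_mod_cast hφ hlt
      rw [hq q] at h2
      have h3 : (φ x : ℝ) < q * r := by
        have := (div_lt_iff₀ hr0).1 hq1
        linarith [mul_comm (q:ℝ) r]
      linarith
    · obtain ⟨q, hq1, hq2⟩ := exists_rat_btwn
        (show (x : ℝ) < (φ x : ℝ) / r from (lt_div_iff₀ hr0).2 (by linarith [mul_comm r (x:ℝ)]))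
      have hlt : x < (q : S) := by
        rw [← Subtype.coe_lt_coe]
        push_cast
        exact hq1
      have h2 : (φ x : ℝ) < (φ (q : S) : ℝ) := by exact_mod_cast hφ hlt
      rw [hq q] at h2
      have h3 : q * r < (φ x : ℝ) := (lt_div_iff₀ hr0).1 hq2
      linarith
  have hrK : r ∈ K := (φ 1).2
  have hinvS : r⁻¹ ∈ S := by
    have h1 : (φ (φ.symm 1) : ℝ) = r * ((φ.symm 1 : S) : ℝ) := key _
    rw [φ.apply_symm_apply] at h1
    have h2 : ((φ.symm 1 : S) : ℝ) = r⁻¹ := by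
      field_simp at h1 ⊢
      push_cast at h1
      linarith
    rw [← h2]
    exact (φ.symm 1).2
  refine ⟨?_, r, hrK, hinvS, key⟩
  ext x
  constructor
  · intro hx
    have h1 : r * x ∈ K := by
      have := key ⟨x, hx⟩
      rw [← this]
      exact (φ ⟨x, hx⟩).2
    have : r⁻¹ * (r * x) ∈ K := K.mul_mem (K.inv_mem hrK) h1
    rwa [inv_mul_cancel_left₀ hrne] at this
  · intro hx
    have h1 : (φ (φ.symm ⟨x, hx⟩) : ℝ) = r * ((φ.symm ⟨x, hx⟩ : S) : ℝ) := key _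
    rw [φ.apply_symm_apply] at h1
    have hrS : r ∈ S := by
      have := S.inv_mem hinvS
      rwa [inv_inv] at this
    have : r * ((φ.symm ⟨x, hx⟩ : S) : ℝ) ∈ S := S.mul_mem hrS (φ.symm ⟨x, hx⟩).2
    rw [← h1] at this
    exact this
end
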